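/- A Lebesgue measurable function u : D → [-∞,∞) is 1-quasi-nearly subharmonic if and only if it is nearly subharmonic, i.e., measurable, u⁺ ∈ L¹_loc(D), and u(x) ≤ (1/(νₙ rⁿ)) ∫_{B(x,r)} u dm for all closed balls B̄(x,r) ⊂ D. -/

import Mathlib

open MeasureTheory Metric Set ENNReal

/-- The volume of the unit ball in `ℝⁿ`. -/
noncomputable def unitBallVol (n : ℕ) : ℝ :=
  (volume (ball (0 : EuclideanSpace ℝ (Fin n)) 1)).toReal

/-- Conversion of an extended real number to `ℝ≥0∞` (the positive part). -/
noncomputable def erealToENNReal (x : EReal) : ℝ≥0∞ :=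
  if x = ⊤ then ⊤ else ENNReal.ofReal x.toReal

/-- The (extended-real valued) integral of an `EReal`-valued function on a set, defined as the
difference of the lower integrals of the positive and the negative parts. -/
noncomputable def erealSetIntegral {α : Type*} [MeasurableSpace α] (μ : Measure α)
    (u : α → EReal) (s : Set α) : EReal :=
  ((∫⁻ y in s, erealToENNReal (u y) ∂μ : ℝ≥0∞) : EReal)
    - ((∫⁻ y in s, erealToENNReal (-(u y)) ∂μ : ℝ≥0∞) : EReal)

lemma erealToENNReal_coe (t : ℝ) : erealToENNReal (t : EReal) = ENNReal.ofReal t := by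
  simp [erealToENNReal]

lemma erealToENNReal_bot : erealToENNReal ⊥ = 0 := by simp [erealToENNReal]

lemma erealToENNReal_mono : Monotone erealToENNReal := by
  intro a b h
  unfold erealToENNReal
  by_cases hb : b = ⊤
  · simp [hb]
  · have ha : a ≠ ⊤ := fun h' => hb (top_le_iff.1 (h' ▸ h))
    simp only [ha, hb, if_false]
    by_cases hab : a = ⊥
    · simp [hab]
    · exact ENNReal.ofReal_le_ofReal (EReal.toReal_le_toReal h hab hb)

lemma erealToENNReal_measurable : Measurable erealToENNReal :=
  erealToENNReal_mono.measurable

lemma erealToENNReal_neg_antitone : Antitone (fun a : EReal => erealToENNReal (-a)) :=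
  fun _ _ h => erealToENNReal_mono (EReal.neg_le_neg_iff.2 h)

lemma erealToENNReal_neg_of_nonneg {a : EReal} (h : 0 ≤ a) : erealToENNReal (-a) = 0 := by
  induction a using EReal.rec with
  | bot => simp at h
  | coe t =>
      rw [← EReal.coe_neg, erealToENNReal_coe, ENNReal.ofReal_eq_zero]
      have : (0:ℝ) ≤ t := by exact_mod_cast h
      linarith
  | top => simp [erealToENNReal]

lemma fM_nonneg {M : ℝ} (a : EReal) :
    0 ≤ max a (-(M : EReal)) + (M : EReal) := by
  have h0 : (0 : EReal) = (-(M : EReal)) + (M : EReal) := by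
    rw [← EReal.coe_neg, ← EReal.coe_add]; norm_num
  rw [h0]
  exact add_le_add_left (le_max_right _ _) _

lemma fM_monotone (M : ℝ) : Monotone (fun a : EReal => max a (-(M : EReal)) + (M : EReal)) :=
  fun _ _ h => add_le_add_left (max_le_max h le_rfl) _

lemma ereal_coe_max (a b : ℝ) : ((max a b : ℝ) : EReal) = max (a : EReal) (b : EReal) := by
  rcases le_total a b with h | h
  · rw [max_eq_right h, max_eq_right (EReal.coe_le_coe_iff.2 h)]
  · rw [max_eq_left h, max_eq_left (EReal.coe_le_coe_iff.2 h)]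

lemma fM_coe (t M : ℝ) :
    max ((t : ℝ) : EReal) (-(M : EReal)) + (M : EReal) = ((max t (-M) + M : ℝ) : EReal) := by
  rw [EReal.coe_add, ereal_coe_max, EReal.coe_neg]

lemma pt_identity {a : EReal} (ha : a ≠ ⊤) {M : ℝ} (hM : 0 ≤ M) :
    erealToENNReal (max a (-(M : EReal)) + (M : EReal))
      + min (erealToENNReal (-a)) (ENNReal.ofReal M)
    = erealToENNReal a + ENNReal.ofReal M := by
  induction a using EReal.rec with
  | top => exact absurd rfl ha
  | bot =>
      have h1 : max (⊥ : EReal) (-(M : EReal)) = -(M : EReal) := max_eq_right bot_le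
      rw [h1, show (-(M:EReal)) + (M:EReal) = ((0:ℝ):EReal) by
        rw [← EReal.coe_neg, ← EReal.coe_add]; norm_num]
      rw [erealToENNReal_coe, erealToENNReal_bot]
      simp [erealToENNReal]
  | coe t =>
      rw [fM_coe, ← EReal.coe_neg, erealToENNReal_coe, erealToENNReal_coe, erealToENNReal_coe]
      rcases le_total t (-M) with h | h
      · rw [max_eq_right h, neg_add_cancel, ENNReal.ofReal_zero, zero_add,
          min_eq_right (ENNReal.ofReal_le_ofReal (by linarith)),
          show ENNReal.ofReal t = 0 from ENNReal.ofReal_eq_zero.2 (by linarith), zero_add]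
      · rcases le_total t 0 with h2 | h2
        · rw [max_eq_left h, min_eq_left (ENNReal.ofReal_le_ofReal (by linarith)),
            ← ENNReal.ofReal_add (by linarith) (by linarith),
            show t + M + -t = M by ring,
            show ENNReal.ofReal t = 0 from ENNReal.ofReal_eq_zero.2 (by linarith), zero_add]
        · rw [max_eq_left h,
            show ENNReal.ofReal (-t) = 0 from ENNReal.ofReal_eq_zero.2 (by linarith)]
          simp [ENNReal.ofReal_add h2 hM]

lemma min_natCast_sup (b : ℝ≥0∞) : ⨆ k : ℕ, min b (ENNReal.ofReal (k : ℝ)) = b := by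
  simp_rw [ENNReal.ofReal_natCast]
  apply le_antisymm (iSup_le fun k => min_le_left _ _)
  by_cases hb : b = ⊤
  · subst hb
    simp only [min_eq_right le_top, top_le_iff]
    exact ENNReal.iSup_natCast
  · obtain ⟨k, hk⟩ := ENNReal.exists_nat_gt hb
    exact le_trans (le_of_eq (min_eq_left hk.le).symm) (le_iSup (fun k : ℕ => min b (k:ℝ≥0∞)) k)

lemma fM_measurable {α : Type*} [MeasurableSpace α] {u : α → EReal} (hmeas : Measurable u)
    (M : ℝ) : Measurable (fun y => erealToENNReal (max (u y) (-(M : EReal)) + (M : EReal))) :=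
  (erealToENNReal_mono.comp (fM_monotone M)).measurable.comp hmeas

lemma neg_part_measurable {α : Type*} [MeasurableSpace α] {u : α → EReal}
    (hmeas : Measurable u) : Measurable (fun y => erealToENNReal (-(u y))) :=
  erealToENNReal_neg_antitone.measurable.comp hmeas

lemma int_identity {α : Type*} [MeasurableSpace α] (μ : Measure α) {u : α → EReal}
    (hmeas : Measurable u) (hne : ∀ x, u x ≠ ⊤) {M : ℝ} (hM : 0 ≤ M) :
    (∫⁻ y, erealToENNReal (max (u y) (-(M : EReal)) + (M : EReal)) ∂μ)
      + (∫⁻ y, min (erealToENNReal (-(u y))) (ENNReal.ofReal M) ∂μ)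
    = (∫⁻ y, erealToENNReal (u y) ∂μ) + ENNReal.ofReal M * μ Set.univ := by
  rw [← lintegral_add_left (fM_measurable hmeas M)]
  rw [lintegral_congr (fun y => pt_identity (hne y) hM)]
  rw [lintegral_add_right _ measurable_const, lintegral_const]

lemma int_sup {α : Type*} [MeasurableSpace α] (μ : Measure α) {u : α → EReal}
    (hmeas : Measurable u) :
    (∫⁻ y, erealToENNReal (-(u y)) ∂μ)
      = ⨆ k : ℕ, ∫⁻ y, min (erealToENNReal (-(u y))) (ENNReal.ofReal (k : ℝ)) ∂μ := by
  rw [show (∫⁻ y, erealToENNReal (-(u y)) ∂μ)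
      = ∫⁻ y, ⨆ k : ℕ, min (erealToENNReal (-(u y))) (ENNReal.ofReal (k : ℝ)) ∂μ from
    lintegral_congr fun y => (min_natCast_sup _).symm]
  exact lintegral_iSup (fun k => (neg_part_measurable hmeas).min measurable_const)
    (fun k k' h y => min_le_min le_rfl (ENNReal.ofReal_le_ofReal (by exact_mod_cast h)))

lemma coe_ennreal_fin {x : ℝ≥0∞} (hx : x ≠ ⊤) : (x : EReal) = ((x.toReal : ℝ) : EReal) := by
  rw [← EReal.toReal_coe_ennreal, EReal.coe_toReal] <;> simp [hx]

lemma erealSetIntegral_fM {α : Type*} [MeasurableSpace α] (μ : Measure α) (u : α → EReal)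
    (s : Set α) (M : ℝ) :
    erealSetIntegral μ (fun y => max (u y) (-(M : EReal)) + (M : EReal)) s
      = ((∫⁻ y in s, erealToENNReal (max (u y) (-(M : EReal)) + (M : EReal)) ∂μ : ℝ≥0∞) : EReal) := by
  unfold erealSetIntegral
  have h0 : ∀ y, erealToENNReal (-(max (u y) (-(M : EReal)) + (M : EReal))) = 0 :=
    fun y => erealToENNReal_neg_of_nonneg (fM_nonneg _)
  simp [h0]

/-- A Lebesgue measurable function `u : D → [-∞, ∞)` on a domain `D ⊆ ℝⁿ`, `n ≥ 2`, with
`u⁺ ∈ L¹_loc(D)`, is `1`-quasi-nearly subharmonic (every truncation `u_M = max(u,-M) + M`,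
`M ≥ 0`, satisfies the mean value inequality `u_M(x) ≤ (1/(νₙ rⁿ)) ∫_{B(x,r)} u_M dm` on all
closed balls `B̄(x,r) ⊆ D`) if and only if it is nearly subharmonic, i.e.
`u(x) ≤ (1/(νₙ rⁿ)) ∫_{B(x,r)} u dm` for all closed balls `B̄(x,r) ⊆ D`. -/
theorem oneQuasiNearlySubharmonic_iff_nearlySubharmonic
    {n : ℕ} (hn : 2 ≤ n) (D : Set (EuclideanSpace ℝ (Fin n)))
    (hDopen : IsOpen D) (hDconn : IsConnected D)
    (u : EuclideanSpace ℝ (Fin n) → EReal)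
    (hne : ∀ x, u x ≠ ⊤) (hmeas : Measurable u)
    (hloc : ∀ k : Set (EuclideanSpace ℝ (Fin n)), IsCompact k → k ⊆ D →
      (∫⁻ x in k, erealToENNReal (u x)) < ⊤) :
    (∀ M : ℝ, 0 ≤ M → ∀ x r, 0 < r → closedBall x r ⊆ D →
      max (u x) (-(M : EReal)) + (M : EReal) ≤
        ((1 / (unitBallVol n * r ^ n) : ℝ) : EReal) *
          erealSetIntegral volume (fun y => max (u y) (-(M : EReal)) + (M : EReal))
            (ball x r)) ↔
    (∀ x r, 0 < r → closedBall x r ⊆ D →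
      u x ≤ ((1 / (unitBallVol n * r ^ n) : ℝ) : EReal) *
        erealSetIntegral volume u (ball x r)) := by
  have hV0 : (0:ℝ) < unitBallVol n :=
    ENNReal.toReal_pos (measure_ball_pos volume (0 : EuclideanSpace ℝ (Fin n)) one_pos).ne'
      measure_ball_lt_top.ne
  constructor
  · -- forward: quasi-nearly ⟹ nearly
    intro H x r hr hsub
    have hV : (0:ℝ) < unitBallVol n * r ^ n := by positivity
    set V : ℝ := unitBallVol n * r ^ n with hVdef
    set c : ℝ := 1 / V with hcdef
    have hcpos : 0 < c := by positivity
    have hcV : c * V = 1 := by rw [hcdef]; exact one_div_mul_cancel hV.ne'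
    have hvol : volume (ball x r) = ENNReal.ofReal V := by
      rw [Measure.addHaar_ball_of_pos volume x hr, finrank_euclideanSpace_fin, hVdef,
        ENNReal.ofReal_mul (by positivity), mul_comm]
      congr 1
      rw [unitBallVol, ENNReal.ofReal_toReal measure_ball_lt_top.ne]
    set A : ℝ≥0∞ := ∫⁻ y in ball x r, erealToENNReal (u y) with hAdef
    set B : ℝ≥0∞ := ∫⁻ y in ball x r, erealToENNReal (-(u y)) with hBdef
    have hAfin : A ≠ ⊤ :=
      (lt_of_le_of_lt (lintegral_mono_set ball_subset_closedBall)
        (hloc _ (isCompact_closedBall x r) hsub)).ne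
    by_cases hbot : u x = ⊥
    · rw [hbot]; exact bot_le
    have hua : u x = (((u x).toReal : ℝ) : EReal) := (EReal.coe_toReal (hne x) hbot).symm
    set a : ℝ := (u x).toReal with hadef
    set I : ℝ → ℝ≥0∞ := fun M =>
      ∫⁻ y in ball x r, erealToENNReal (max (u y) (-(M : EReal)) + (M : EReal)) with hIdef
    set J : ℝ → ℝ≥0∞ := fun M =>
      ∫⁻ y in ball x r, min (erealToENNReal (-(u y))) (ENNReal.ofReal M) with hJdef
    have hIJ : ∀ M : ℝ, 0 ≤ M → I M + J M = A + ENNReal.ofReal M * ENNReal.ofReal V := by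
      intro M hM
      have := int_identity (volume.restrict (ball x r)) hmeas hne hM
      rwa [Measure.restrict_apply_univ, hvol] at this
    have hJle : ∀ M : ℝ, J M ≤ ENNReal.ofReal M * ENNReal.ofReal V := by
      intro M
      calc J M ≤ ∫⁻ _ in ball x r, ENNReal.ofReal M :=
            lintegral_mono fun y => min_le_right _ _
        _ = ENNReal.ofReal M * ENNReal.ofReal V := by rw [setLIntegral_const, hvol]
    have hRfin : ∀ M : ℝ, A + ENNReal.ofReal M * ENNReal.ofReal V ≠ ⊤ :=
      fun M => ENNReal.add_ne_top.2 ⟨hAfin, ENNReal.mul_ne_top ofReal_ne_top ofReal_ne_top⟩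
    have hIfin : ∀ M : ℝ, 0 ≤ M → I M ≠ ⊤ := by
      intro M hM
      exact ne_top_of_le_ne_top (hRfin M) (le_trans le_self_add (le_of_eq (hIJ M hM)))
    have hJfin : ∀ M : ℝ, 0 ≤ M → J M ≠ ⊤ := by
      intro M hM
      exact ne_top_of_le_ne_top (hRfin M) (le_trans le_add_self (le_of_eq (hIJ M hM)))
    have hBsup : B = ⨆ k : ℕ, J (k : ℝ) := int_sup (volume.restrict (ball x r)) hmeas
    -- the real-valued inequality for each k
    have hIJk : ∀ M : ℝ, 0 ≤ M → (I M).toReal + (J M).toReal = A.toReal + M * V := by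
      intro M hM
      have h1 := congrArg ENNReal.toReal (hIJ M hM)
      rwa [ENNReal.toReal_add (hIfin M hM) (hJfin M hM),
        ENNReal.toReal_add hAfin (ENNReal.mul_ne_top ofReal_ne_top ofReal_ne_top),
        ENNReal.toReal_mul, ENNReal.toReal_ofReal hM, ENNReal.toReal_ofReal hV.le] at h1
    have hreal : ∀ k : ℕ, a ≤ c * A.toReal - c * (J (k : ℝ)).toReal := by
      intro k
      have hk := H (k : ℝ) (Nat.cast_nonneg k) x r hr hsub
      rw [erealSetIntegral_fM] at hk
      rw [hua, fM_coe, coe_ennreal_fin (hIfin (k:ℝ) (Nat.cast_nonneg k)), ← EReal.coe_mul,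
        EReal.coe_le_coe_iff] at hk
      have h2 : a + (k : ℝ) ≤ c * (I (k : ℝ)).toReal :=
        le_trans (by have := le_max_left a (-(k:ℝ)); linarith) hk
      have h3 := hIJk (k : ℝ) (Nat.cast_nonneg k)
      nlinarith [ENNReal.toReal_nonneg (a := J (k:ℝ))]
    have hK0 : 0 ≤ (c * A.toReal - a) / c := by
      have h0 := hreal 0
      rw [Nat.cast_zero] at h0
      have hj0 : 0 ≤ (J (0:ℝ)).toReal := ENNReal.toReal_nonneg
      apply div_nonneg _ hcpos.le
      nlinarith
    have hJb : ∀ k : ℕ, J (k : ℝ) ≤ ENNReal.ofReal ((c * A.toReal - a) / c) := by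
      intro k
      have h1 : (J (k : ℝ)).toReal ≤ (c * A.toReal - a) / c := by
        rw [le_div_iff₀ hcpos]
        have := hreal k
        nlinarith
      calc J (k : ℝ) = ENNReal.ofReal (J (k : ℝ)).toReal :=
            (ENNReal.ofReal_toReal (hJfin _ (Nat.cast_nonneg k))).symm
        _ ≤ _ := ENNReal.ofReal_le_ofReal h1
    have hBle : B ≤ ENNReal.ofReal ((c * A.toReal - a) / c) := by
      rw [hBsup]; exact iSup_le hJb
    have hBfin : B ≠ ⊤ := (lt_of_le_of_lt hBle ofReal_lt_top).ne
    have hBK : B.toReal ≤ (c * A.toReal - a) / c :=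
      ENNReal.toReal_le_of_le_ofReal hK0 hBle
    rw [show erealSetIntegral volume u (ball x r) = (A : EReal) - (B : EReal) from rfl]
    rw [coe_ennreal_fin hAfin, coe_ennreal_fin hBfin, ← EReal.coe_sub, ← EReal.coe_mul, hua,
      EReal.coe_le_coe_iff]
    rw [le_div_iff₀ hcpos] at hBK
    nlinarith
  · -- backward: nearly ⟹ quasi-nearly
    intro H M hM x r hr hsub
    have hV : (0:ℝ) < unitBallVol n * r ^ n := by positivity
    set V : ℝ := unitBallVol n * r ^ n with hVdef
    set c : ℝ := 1 / V with hcdef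
    have hcpos : 0 < c := by positivity
    have hcV : c * V = 1 := by rw [hcdef]; exact one_div_mul_cancel hV.ne'
    have hvol : volume (ball x r) = ENNReal.ofReal V := by
      rw [Measure.addHaar_ball_of_pos volume x hr, finrank_euclideanSpace_fin, hVdef,
        ENNReal.ofReal_mul (by positivity), mul_comm]
      congr 1
      rw [unitBallVol, ENNReal.ofReal_toReal measure_ball_lt_top.ne]
    set A : ℝ≥0∞ := ∫⁻ y in ball x r, erealToENNReal (u y) with hAdef
    set B : ℝ≥0∞ := ∫⁻ y in ball x r, erealToENNReal (-(u y)) with hBdef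
    have hAfin : A ≠ ⊤ :=
      (lt_of_le_of_lt (lintegral_mono_set ball_subset_closedBall)
        (hloc _ (isCompact_closedBall x r) hsub)).ne
    set I : ℝ≥0∞ := ∫⁻ y in ball x r, erealToENNReal (max (u y) (-(M : EReal)) + (M : EReal))
      with hIdef
    set J : ℝ≥0∞ := ∫⁻ y in ball x r, min (erealToENNReal (-(u y))) (ENNReal.ofReal M) with hJdef
    have hIJ : I + J = A + ENNReal.ofReal M * ENNReal.ofReal V := by
      have := int_identity (volume.restrict (ball x r)) hmeas hne hM
      rwa [Measure.restrict_apply_univ, hvol] at this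
    have hRfin : A + ENNReal.ofReal M * ENNReal.ofReal V ≠ ⊤ :=
      ENNReal.add_ne_top.2 ⟨hAfin, ENNReal.mul_ne_top ofReal_ne_top ofReal_ne_top⟩
    have hIfin : I ≠ ⊤ := ne_top_of_le_ne_top hRfin (le_trans le_self_add (le_of_eq hIJ))
    have hJfin : J ≠ ⊤ := ne_top_of_le_ne_top hRfin (le_trans le_add_self (le_of_eq hIJ))
    have hJB : J ≤ B := lintegral_mono fun y => min_le_left _ _
    rw [erealSetIntegral_fM]
    rcases le_or_gt (u x) (-(M : EReal)) with hx | hx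
    · rw [max_eq_right hx, show (-(M : EReal)) + (M : EReal) = (0 : EReal) by
        rw [← EReal.coe_neg, ← EReal.coe_add]; norm_num]
      exact mul_nonneg (EReal.coe_nonneg.2 hcpos.le) (EReal.coe_ennreal_nonneg _)
    · have hbot : u x ≠ ⊥ := by
        intro h; rw [h] at hx; exact absurd hx (by simp)
      have hua : u x = (((u x).toReal : ℝ) : EReal) := (EReal.coe_toReal (hne x) hbot).symm
      set a : ℝ := (u x).toReal with hadef
      have hxM : -M ≤ a := by
        rw [hua, ← EReal.coe_neg] at hx
        exact (EReal.coe_lt_coe_iff.1 hx).le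
      have hu := H x r hr hsub
      rw [show erealSetIntegral volume u (ball x r) = (A : EReal) - (B : EReal) from rfl] at hu
      have hBfin : B ≠ ⊤ := by
        intro hB
        rw [hB, EReal.coe_ennreal_top, EReal.sub_top, hua] at hu
        have : ((1 / V : ℝ) : EReal) * ⊥ = ⊥ :=
          EReal.coe_mul_bot_of_pos (by exact_mod_cast hcpos)
        rw [this] at hu
        exact absurd hu (by simp)
      rw [coe_ennreal_fin hAfin, coe_ennreal_fin hBfin, ← EReal.coe_sub, ← EReal.coe_mul, hua,
        EReal.coe_le_coe_iff] at hu
      -- real computation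
      have hIJr : I.toReal + J.toReal = A.toReal + M * V := by
        have h1 := congrArg ENNReal.toReal hIJ
        rwa [ENNReal.toReal_add hIfin hJfin,
          ENNReal.toReal_add hAfin (ENNReal.mul_ne_top ofReal_ne_top ofReal_ne_top),
          ENNReal.toReal_mul, ENNReal.toReal_ofReal hM, ENNReal.toReal_ofReal hV.le] at h1
      have hJBr : J.toReal ≤ B.toReal := ENNReal.toReal_mono hBfin hJB
      rw [hua, fM_coe, coe_ennreal_fin hIfin, ← EReal.coe_mul, EReal.coe_le_coe_iff,
        max_eq_left hxM]
      nlinarith
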